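/- Let q = 3, let n ≥ 3 be an integer, and let M = 𝔽_3^{n×n} ⊕ 𝔽_3^{n×n} (the case t = 2). Then there exists no perfect linear sum-rank code C in M whose minimum distance d satisfies ⌊(d−1)/2⌋ ≥ 1 (equivalently, d ≥ 3). -/

import Mathlib

open Matrix Finset Module

/-- The sum-rank weight of a tuple of matrices. -/
noncomputable def sumRankW {F : Type} [Field F] {t n m : ℕ}
    (X : Fin t → Matrix (Fin n) (Fin m) F) : ℕ :=
  ∑ i, (X i).rank

/-- The number of tuples of matrices of sum-rank weight at most `r`
(the volume of a sum-rank ball of radius `r`). -/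
noncomputable def ballVol (F : Type) [Field F] [Fintype F] (t n m r : ℕ) : ℕ :=
  Nat.card {X : Fin t → Matrix (Fin n) (Fin m) F // sumRankW X ≤ r}

/-- `d` is the minimum sum-rank distance of the linear code `C`:
`d` is the least sum-rank weight of a nonzero codeword of `C`
(in particular `C` contains a nonzero element). -/
def IsMinDist {F : Type} [Field F] {t n : ℕ}
    (C : Submodule F (Fin t → Matrix (Fin n) (Fin n) F)) (d : ℕ) : Prop :=
  IsLeast {w | ∃ x ∈ C, x ≠ 0 ∧ sumRankW x = w} d

/-- The linear code `C` with minimum distance `d` is perfect: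
`|C| · V_{⌊(d-1)/2⌋} = |M|`. -/
def IsPerfect (F : Type) [Field F] [Fintype F] {t n : ℕ}
    (C : Submodule F (Fin t → Matrix (Fin n) (Fin n) F)) (d : ℕ) : Prop :=
  Nat.card C * ballVol F t n n ((d - 1) / 2) =
    Nat.card (Fin t → Matrix (Fin n) (Fin n) F)


open Matrix Finset

/-- Product formula factor: key induction inequality. -/
lemma psr_nat_ineq1 (a : ℕ) :
    3 ^ (∑ i ∈ Finset.range a, (i+1)) * (3^a + 1)
      ≤ 2 * 3^a * ∏ j ∈ Finset.range a, (3^(j+1) - 1) := by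
  induction a with
  | zero => simp
  | succ a ih =>
    rw [Finset.sum_range_succ, Finset.prod_range_succ]
    have h0 : 1 ≤ 3^a := Nat.one_le_pow _ _ (by norm_num)
    have hy : 3^(a+1) = 3 * 3^a := by rw [pow_succ]; ring
    have key : 3^(a+1) * (3^(a+1) + 1) ≤ 3 * (3^a + 1) * (3^(a+1) - 1) := by
      have ht : 3 * 3^a - 1 + 1 = 3 * 3^a := by omega
      rw [hy]
      nlinarith [h0, ht]
    calc 3 ^ (∑ i ∈ Finset.range a, (i+1) + (a+1)) * (3^(a+1) + 1)
        = 3 ^ (∑ i ∈ Finset.range a, (i+1)) * (3^(a+1) * (3^(a+1) + 1)) := by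
          rw [pow_add]; ring
      _ ≤ 3 ^ (∑ i ∈ Finset.range a, (i+1)) * (3 * (3^a + 1) * (3^(a+1) - 1)) :=
          Nat.mul_le_mul_left _ key
      _ = 3 * (3 ^ (∑ i ∈ Finset.range a, (i+1)) * (3^a + 1)) * (3^(a+1) - 1) := by ring
      _ ≤ 3 * (2 * 3^a * ∏ j ∈ Finset.range a, (3^(j+1) - 1)) * (3^(a+1) - 1) := by
          have := Nat.mul_le_mul_right (3^(a+1) - 1) (Nat.mul_le_mul_left 3 ih)
          exact this
      _ = 2 * 3^(a+1) * ((∏ j ∈ Finset.range a, (3^(j+1) - 1)) * (3^(a+1) - 1)) := by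
          rw [hy]; ring

lemma psr_prod_GL_eq (a : ℕ) :
    ∏ i ∈ Finset.range a, (3^a - 3^i)
      = 3 ^ (∑ i ∈ Finset.range a, i) * ∏ j ∈ Finset.range a, (3^(j+1) - 1) := by
  rw [← Finset.prod_pow_eq_pow_sum, ← Finset.prod_range_reflect (fun j => 3^(j+1) - 1) a,
    ← Finset.prod_mul_distrib]
  apply Finset.prod_congr rfl
  intro i hi
  have hi' : i < a := Finset.mem_range.mp hi
  have h1 : a - 1 - i + 1 = a - i := by omega
  have h2 : 3^i * 3^(a-i) = 3^a := by rw [← pow_add]; congr 1; omega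
  have h3 : (1:ℕ) ≤ 3^(a-i) := Nat.one_le_pow _ _ (by norm_num)
  rw [h1, Nat.mul_sub, h2, mul_one]

lemma psr_GL_lower (a : ℕ) :
    3 ^ (a*a) ≤ 2 * ∏ i ∈ Finset.range a, (3^a - 3^i) := by
  have h1 := psr_nat_ineq1 a
  rw [psr_prod_GL_eq]
  have hsum : (∑ i ∈ Finset.range a, i) + (∑ i ∈ Finset.range a, (i+1)) = a*a := by
    have h2 : (∑ i ∈ Finset.range a, i) * 2 = a * (a - 1) := Finset.sum_range_id_mul_two a
    have h3 : ∑ i ∈ Finset.range a, (i+1) = (∑ i ∈ Finset.range a, i) + a := by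
      rw [Finset.sum_add_distrib, Finset.sum_const, Finset.card_range, smul_eq_mul, mul_one]
    rw [h3]
    cases a with
    | zero => simp
    | succ b =>
      have h4 : (b+1) * (b+1-1) + (b+1) = (b+1)*(b+1) := by
        simp only [Nat.add_sub_cancel]; ring
      linarith [h2, h4]
  have hc : 3^(a*a) * 3^a
      ≤ (2 * (3 ^ (∑ i ∈ Finset.range a, i) * ∏ j ∈ Finset.range a, (3^(j+1) - 1))) * 3^a := by
    calc 3^(a*a) * 3^a ≤ 3^(a*a) * (3^a + 1) := Nat.mul_le_mul_left _ (by omega)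
      _ = 3 ^ (∑ i ∈ Finset.range a, i) * (3 ^ (∑ i ∈ Finset.range a, (i+1)) * (3^a + 1)) := by
          rw [← mul_assoc, ← pow_add, hsum]
      _ ≤ 3 ^ (∑ i ∈ Finset.range a, i) * (2 * 3^a * ∏ j ∈ Finset.range a, (3^(j+1) - 1)) :=
          Nat.mul_le_mul_left _ h1
      _ = (2 * (3 ^ (∑ i ∈ Finset.range a, i) * ∏ j ∈ Finset.range a, (3^(j+1) - 1))) * 3^a := by
          ring
  exact Nat.le_of_mul_le_mul_right hc (by positivity)



/-- A square matrix supported on the first `k` columns has rank at most `k`. -/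
lemma psr_rank_le_of_zero_cols {K : Type} [Field K] {n k : ℕ} (hk : k ≤ n)
    (X : Matrix (Fin n) (Fin n) K) (h : ∀ (r c : Fin n), k ≤ (c : ℕ) → X r c = 0) :
    X.rank ≤ k := by
  classical
  let P : Matrix (Fin k) (Fin n) K := fun i j => if (i : ℕ) = (j : ℕ) then 1 else 0
  have hX : X = (X.submatrix id (Fin.castLE hk)) * P := by
    ext r c
    rw [Matrix.mul_apply]
    by_cases hc : (c : ℕ) < k
    · rw [Finset.sum_eq_single (⟨(c : ℕ), hc⟩ : Fin k)]
      · simp only [Matrix.submatrix_apply, id_eq, P, if_pos rfl]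
        have : Fin.castLE hk ⟨(c : ℕ), hc⟩ = c := by ext; rfl
        rw [this, mul_one]
      · intro b _ hb
        simp only [P]
        rw [if_neg, mul_zero]
        intro hbc
        exact hb (by ext; exact hbc)
      · intro hmem; exact absurd (Finset.mem_univ _) hmem
    · rw [h r c (le_of_not_gt hc), Finset.sum_eq_zero]
      intro b _
      simp only [P]
      rw [if_neg, mul_zero]
      intro hbc
      omega
  calc X.rank = ((X.submatrix id (Fin.castLE hk)) * P).rank := by rw [← hX]
    _ ≤ (X.submatrix id (Fin.castLE hk)).rank := Matrix.rank_mul_le_left _ _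
    _ ≤ k := by simpa using Matrix.rank_le_card_width (X.submatrix id (Fin.castLE hk))

lemma psr_eq_zero_of_rank_le_zero {K : Type} [Field K] {n : ℕ}
    {X : Matrix (Fin n) (Fin n) K} (h : X.rank ≤ 0) : X = 0 := by
  classical
  have h0 : X.rank = 0 := Nat.le_zero.mp h
  have hb : LinearMap.range X.mulVecLin = ⊥ := Submodule.finrank_eq_zero.mp h0
  have hv : ∀ v, X.mulVecLin v = 0 := by
    intro v
    have : X.mulVecLin v ∈ LinearMap.range X.mulVecLin := LinearMap.mem_range_self _ v
    rw [hb] at this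
    simpa using this
  ext r c
  have := congrFun (hv (Pi.single c 1)) r
  rw [Matrix.mulVecLin_apply, Matrix.mulVec_single_one] at this
  simpa using this

/-- Rank factorization with a right-invertible second factor. -/
lemma psr_exists_fact {K : Type} [Field K] {n a : ℕ} (han : a ≤ n)
    (X : Matrix (Fin n) (Fin n) K) (h : X.rank ≤ a) :
    ∃ (B : Matrix (Fin n) (Fin a) K) (C : Matrix (Fin a) (Fin n) K)
      (D : Matrix (Fin n) (Fin a) K), X = B * C ∧ C * D = 1 := by
  classical
  set f := X.mulVecLin with hf
  have hrn : finrank K (LinearMap.range f) + finrank K (LinearMap.ker f) = n := by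
    rw [LinearMap.finrank_range_add_finrank_ker f, Module.finrank_fin_fun]
  have hker : n - a ≤ finrank K (LinearMap.ker f) := by
    have : finrank K (LinearMap.range f) ≤ a := h
    omega
  obtain ⟨g, hg⟩ := exists_linearIndependent_of_le_finrank (R := K)
    (M := LinearMap.ker f) (n := n - a) hker
  have hgi : LinearIndependent K ((LinearMap.ker f).subtype ∘ g) :=
    hg.map' (LinearMap.ker f).subtype (Submodule.ker_subtype _)
  set K' : Submodule K (Fin n → K) := Submodule.span K (Set.range ((LinearMap.ker f).subtype ∘ g))
  have hK'le : K' ≤ LinearMap.ker f := by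
    rw [Submodule.span_le]
    rintro x ⟨i, rfl⟩
    exact ((g i) : LinearMap.ker f).2
  have hK'rank : finrank K K' = n - a := by
    rw [finrank_span_eq_card hgi, Fintype.card_fin]
  have hQ : finrank K ((Fin n → K) ⧸ K') = a := by
    have := Submodule.finrank_quotient_add_finrank K'
    rw [Module.finrank_fin_fun, hK'rank] at this
    omega
  have e : ((Fin n → K) ⧸ K') ≃ₗ[K] (Fin a → K) :=
    LinearEquiv.ofFinrankEq _ _ (by rw [hQ, Module.finrank_fin_fun])
  set Cmap : (Fin n → K) →ₗ[K] (Fin a → K) := (e : _ →ₗ[K] _) ∘ₗ K'.mkQ with hCmap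
  have hCsurj : Function.Surjective Cmap := by
    intro y
    obtain ⟨z, hz⟩ := K'.mkQ_surjective (e.symm y)
    exact ⟨z, by simp [Cmap, hz]⟩
  set Bmap : (Fin a → K) →ₗ[K] (Fin n → K) := (K'.liftQ f hK'le) ∘ₗ (e.symm : _ →ₗ[K] _)
  have hBC : Bmap ∘ₗ Cmap = f := by
    ext v
    simp [Bmap, Cmap, Submodule.liftQ_apply]
  obtain ⟨Dmap, hD⟩ := Cmap.exists_rightInverse_of_surjective (LinearMap.range_eq_top.2 hCsurj)
  refine ⟨LinearMap.toMatrix' Bmap, LinearMap.toMatrix' Cmap, LinearMap.toMatrix' Dmap, ?_, ?_⟩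
  · rw [← LinearMap.toMatrix'_comp, hBC, hf, ← Matrix.toLin'_apply', LinearMap.toMatrix'_toLin']
  · rw [← LinearMap.toMatrix'_comp, hD, LinearMap.toMatrix'_id]





lemma psr_card_matrix (p q : ℕ) :
    Nat.card (Matrix (Fin p) (Fin q) (ZMod 3)) = 3 ^ (p * q) := by
  have h : Nat.card (Matrix (Fin p) (Fin q) (ZMod 3))
      = Nat.card (Fin p → Fin q → ZMod 3) := rfl
  rw [h, Nat.card_fun, Nat.card_fun, Nat.card_eq_fintype_card (α := ZMod 3), ZMod.card,
    Nat.card_eq_fintype_card (α := Fin q), Nat.card_eq_fintype_card (α := Fin p),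
    Fintype.card_fin, Fintype.card_fin, ← pow_mul, mul_comm q p]

lemma psr_core {n a : ℕ} (han : a ≤ n) :
    Nat.card {X : Matrix (Fin n) (Fin n) (ZMod 3) // X.rank ≤ a}
        * Nat.card (GL (Fin a) (ZMod 3)) ≤ 3 ^ (n*a) * 3 ^ (a*n)
    ∧ (1 ≤ a → Nat.card {X : Matrix (Fin n) (Fin n) (ZMod 3) // X.rank ≤ a}
        * Nat.card (GL (Fin a) (ZMod 3)) < 3 ^ (n*a) * 3 ^ (a*n)) := by
  classical
  choose B C D hBC hCD using
    fun (X : {X : Matrix (Fin n) (Fin n) (ZMod 3) // X.rank ≤ a}) => psr_exists_fact han X.1 X.2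
  set Φ : {X : Matrix (Fin n) (Fin n) (ZMod 3) // X.rank ≤ a} × GL (Fin a) (ZMod 3)
      → Matrix (Fin n) (Fin a) (ZMod 3) × Matrix (Fin a) (Fin n) (ZMod 3) :=
    fun p => (B p.1 * (p.2⁻¹).val, p.2.val * C p.1) with hΦ
  have hinvmul : ∀ (G : GL (Fin a) (ZMod 3)), (G⁻¹).val * G.val = 1 :=
    fun G => Units.inv_mul G
  have hmulinv : ∀ (G : GL (Fin a) (ZMod 3)), G.val * (G⁻¹).val = 1 :=
    fun G => Units.mul_inv G
  have hinj : Function.Injective Φ := by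
    rintro ⟨X, G⟩ ⟨Y, H⟩ heq
    have h1 : B X * (G⁻¹).val = B Y * (H⁻¹).val :=
      congrArg Prod.fst heq
    have h2 : G.val * C X = H.val * C Y :=
      congrArg Prod.snd heq
    have hXY : X = Y := by
      apply Subtype.ext
      calc X.1 = B X * C X := hBC X
        _ = (B X * (G⁻¹).val) * (G.val * C X) := by
            rw [Matrix.mul_assoc, ← Matrix.mul_assoc ((G⁻¹).val),
              hinvmul, Matrix.one_mul]
        _ = (B Y * (H⁻¹).val) * (H.val * C Y) := by rw [h1, h2]
        _ = B Y * C Y := by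
            rw [Matrix.mul_assoc, ← Matrix.mul_assoc ((H⁻¹).val),
              hinvmul, Matrix.one_mul]
        _ = Y.1 := (hBC Y).symm
    subst hXY
    have h3 : G.val = H.val := by
      calc G.val = G.val * (C X * D X) := by rw [hCD, Matrix.mul_one]
        _ = (G.val * C X) * D X := by rw [Matrix.mul_assoc]
        _ = (H.val * C X) * D X := by rw [h2]
        _ = H.val * (C X * D X) := by rw [Matrix.mul_assoc]
        _ = H.val := by rw [hCD, Matrix.mul_one]
    exact Prod.ext rfl (Units.ext h3)
  constructor
  · calc Nat.card {X : Matrix (Fin n) (Fin n) (ZMod 3) // X.rank ≤ a}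
        * Nat.card (GL (Fin a) (ZMod 3))
        = Nat.card ({X : Matrix (Fin n) (Fin n) (ZMod 3) // X.rank ≤ a}
            × GL (Fin a) (ZMod 3)) := (Nat.card_prod _ _).symm
      _ ≤ Nat.card (Matrix (Fin n) (Fin a) (ZMod 3) × Matrix (Fin a) (Fin n) (ZMod 3)) :=
          Nat.card_le_card_of_injective Φ hinj
      _ = 3 ^ (n*a) * 3 ^ (a*n) := by
          rw [Nat.card_prod, psr_card_matrix, psr_card_matrix]
  · intro ha
    have hnotmem : (0, 0) ∉ Set.range Φ := by
      rintro ⟨⟨X, G⟩, hp⟩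
      have h2 : G.val * C X = 0 := congrArg Prod.snd hp
      have hG0 : G.val = 0 := by
        calc G.val = G.val * (C X * D X) := by rw [hCD, Matrix.mul_one]
          _ = (G.val * C X) * D X := by rw [Matrix.mul_assoc]
          _ = 0 := by rw [h2, Matrix.zero_mul]
      have h1 : (1 : Matrix (Fin a) (Fin a) (ZMod 3)) = 0 := by
        rw [← hmulinv G, hG0, Matrix.zero_mul]
      have := congrFun (congrFun h1 ⟨0, ha⟩) ⟨0, ha⟩
      rw [Matrix.one_apply_eq] at this
      simp only [Matrix.zero_apply] at this
      exact one_ne_zero this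
    letI : Fintype {X : Matrix (Fin n) (Fin n) (ZMod 3) // X.rank ≤ a} := Fintype.ofFinite _
    calc Nat.card {X : Matrix (Fin n) (Fin n) (ZMod 3) // X.rank ≤ a}
        * Nat.card (GL (Fin a) (ZMod 3))
        = Nat.card ({X : Matrix (Fin n) (Fin n) (ZMod 3) // X.rank ≤ a}
            × GL (Fin a) (ZMod 3)) := (Nat.card_prod _ _).symm
      _ < Nat.card (Matrix (Fin n) (Fin a) (ZMod 3) × Matrix (Fin a) (Fin n) (ZMod 3)) := by
          rw [Nat.card_eq_fintype_card, Nat.card_eq_fintype_card]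
          exact Fintype.card_lt_of_injective_of_notMem Φ hinj hnotmem
      _ = 3 ^ (n*a) * 3 ^ (a*n) := by
          rw [Nat.card_prod, psr_card_matrix, psr_card_matrix]

lemma psr_cardGL (a : ℕ) :
    Nat.card (GL (Fin a) (ZMod 3)) = ∏ i ∈ Finset.range a, (3^a - 3^i) := by
  rw [Matrix.card_GL_field, Finset.prod_range]
  simp [ZMod.card]

lemma psr_R_bound {n : ℕ} (a : ℕ) (han : a ≤ n) :
    Nat.card {X : Matrix (Fin n) (Fin n) (ZMod 3) // X.rank ≤ a} * 3^(a*a)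
      ≤ 2 * 3^(2*n*a) := by
  have h1 := (psr_core han).1
  have h2 : 3 ^ (a*a) ≤ 2 * Nat.card (GL (Fin a) (ZMod 3)) := by
    rw [psr_cardGL]; exact psr_GL_lower a
  calc Nat.card {X : Matrix (Fin n) (Fin n) (ZMod 3) // X.rank ≤ a} * 3^(a*a)
      ≤ Nat.card {X : Matrix (Fin n) (Fin n) (ZMod 3) // X.rank ≤ a}
          * (2 * Nat.card (GL (Fin a) (ZMod 3))) := Nat.mul_le_mul_left _ h2
    _ = 2 * (Nat.card {X : Matrix (Fin n) (Fin n) (ZMod 3) // X.rank ≤ a}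
          * Nat.card (GL (Fin a) (ZMod 3))) := by ring
    _ ≤ 2 * (3 ^ (n*a) * 3 ^ (a*n)) := Nat.mul_le_mul_left _ h1
    _ = 2 * 3^(2*n*a) := by rw [← pow_add]; ring_nf

lemma psr_R1_strict {n : ℕ} (hn : 1 ≤ n) :
    Nat.card {X : Matrix (Fin n) (Fin n) (ZMod 3) // X.rank ≤ 1} * 2 < 3 ^ (2*n) := by
  have h := (psr_core (n := n) (a := 1) hn).2 le_rfl
  have hGL : Nat.card (GL (Fin 1) (ZMod 3)) = 2 := by
    rw [psr_cardGL]; decide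
  rw [hGL] at h
  calc Nat.card {X : Matrix (Fin n) (Fin n) (ZMod 3) // X.rank ≤ 1} * 2
      < 3 ^ (n*1) * 3 ^ (1*n) := h
    _ = 3 ^ (2*n) := by rw [← pow_add]; ring_nf











lemma psr_sumRankW_two {n : ℕ} (X : Fin 2 → Matrix (Fin n) (Fin n) (ZMod 3)) :
    sumRankW X = (X 0).rank + (X 1).rank := by
  simp [sumRankW, Fin.sum_univ_two]

lemma psr_ball_decomp {n k : ℕ} :
    Nat.card {X : Fin 2 → Matrix (Fin n) (Fin n) (ZMod 3) // sumRankW X ≤ k}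
      ≤ ∑ a ∈ Finset.range (k+1),
          Nat.card {Y : Matrix (Fin n) (Fin n) (ZMod 3) // Y.rank ≤ a}
          * Nat.card {Y : Matrix (Fin n) (Fin n) (ZMod 3) // Y.rank ≤ k - a} := by
  classical
  have hcard : Nat.card {X : Fin 2 → Matrix (Fin n) (Fin n) (ZMod 3) // sumRankW X ≤ k}
      = (Finset.univ.filter
          (fun X : Fin 2 → Matrix (Fin n) (Fin n) (ZMod 3) => sumRankW X ≤ k)).card := by
    rw [Nat.card_eq_fintype_card, Fintype.card_subtype]
  rw [hcard]
  have hmem : ∀ X ∈ Finset.univ.filter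
      (fun X : Fin 2 → Matrix (Fin n) (Fin n) (ZMod 3) => sumRankW X ≤ k),
      (X 0).rank ∈ Finset.range (k+1) := by
    intro X hX
    simp only [Finset.mem_filter, Finset.mem_univ, true_and] at hX
    rw [psr_sumRankW_two] at hX
    exact Finset.mem_range.mpr (by omega)
  rw [Finset.card_eq_sum_card_fiberwise hmem]
  apply Finset.sum_le_sum
  intro a _
  have hR : ∀ (j : ℕ), Nat.card {Y : Matrix (Fin n) (Fin n) (ZMod 3) // Y.rank ≤ j}
      = (Finset.univ.filter
          (fun Y : Matrix (Fin n) (Fin n) (ZMod 3) => Y.rank ≤ j)).card := fun j => by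
    rw [Nat.card_eq_fintype_card, Fintype.card_subtype]
  rw [hR, hR, ← Finset.card_product]
  have hmaps : ∀ X ∈ (Finset.univ.filter
        (fun X : Fin 2 → Matrix (Fin n) (Fin n) (ZMod 3) => sumRankW X ≤ k)).filter
        (fun X => (X 0).rank = a),
      (X 0, X 1) ∈ (Finset.univ.filter
          (fun Y : Matrix (Fin n) (Fin n) (ZMod 3) => Y.rank ≤ a)) ×ˢ
        (Finset.univ.filter
          (fun Y : Matrix (Fin n) (Fin n) (ZMod 3) => Y.rank ≤ k - a)) := by
    intro X hX
    simp only [Finset.mem_filter, Finset.mem_univ, true_and] at hX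
    obtain ⟨h1, h2⟩ := hX
    rw [psr_sumRankW_two] at h1
    rw [Finset.mem_product]
    constructor
    · simp only [Finset.mem_filter, Finset.mem_univ, true_and]; omega
    · simp only [Finset.mem_filter, Finset.mem_univ, true_and]; omega
  apply Finset.card_le_card_of_injOn (fun X => (X 0, X 1)) (fun X hX => hmaps X hX)
  intro X _ Y _ hXY
  funext i
  fin_cases i
  · exact congrArg Prod.fst hXY
  · exact congrArg Prod.snd hXY

lemma psr_36k {k : ℕ} (hk : 2 ≤ k) : 36*k - 28 < 9^k := by
  induction k with
  | zero => omega
  | succ m ih =>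
    rcases Nat.lt_or_ge m 2 with hm | hm
    · interval_cases m <;> norm_num
    · have h9 : 9^m ≥ 9^2 := Nat.pow_le_pow_right (by norm_num) hm
      have := ih hm
      have h2 : 9^(m+1) = 9 * 9^m := by rw [pow_succ]; ring
      omega

lemma psr_sq_ge {a : ℕ} (ha : 1 ≤ a) : 2*a ≤ a*a + 1 := by
  obtain ⟨c, rfl⟩ := Nat.exists_eq_add_of_le ha
  nlinarith

lemma psr_ball_lt {n k : ℕ} (h1 : 1 ≤ k) (hkn : k ≤ n) :
    Nat.card {X : Fin 2 → Matrix (Fin n) (Fin n) (ZMod 3) // sumRankW X ≤ k}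
      < 3 ^ (2*n*k) := by
  have hdec := psr_ball_decomp (n := n) (k := k)
  set R : ℕ → ℕ :=
    fun j => Nat.card {Y : Matrix (Fin n) (Fin n) (ZMod 3) // Y.rank ≤ j} with hRdef
  have hR0 : R 0 = 1 := by
    rw [hRdef, Nat.card_eq_one_iff_unique]
    constructor
    · constructor
      rintro ⟨X, hX⟩ ⟨Y, hY⟩
      apply Subtype.ext
      show X = Y
      rw [psr_eq_zero_of_rank_le_zero hX, psr_eq_zero_of_rank_le_zero hY]
    · exact ⟨0, by simp⟩
  rcases Nat.eq_or_lt_of_le h1 with hk1 | hk2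
  · -- k = 1
    subst hk1
    rw [Finset.sum_range_succ, Finset.sum_range_succ, Finset.sum_range_zero] at hdec
    have hR0' : Nat.card {Y : Matrix (Fin n) (Fin n) (ZMod 3) // Y.rank ≤ 0} = 1 := hR0
    have hstrict : Nat.card {Y : Matrix (Fin n) (Fin n) (ZMod 3) // Y.rank ≤ 1} * 2
        < 3^(2*n) := psr_R1_strict (by omega)
    have hgoal : 2*n*1 = 2*n := by ring
    rw [hgoal]
    simp only [Nat.sub_zero, Nat.sub_self] at hdec
    rw [hR0'] at hdec
    simp only [one_mul, mul_one] at hdec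
    omega
  · -- 2 ≤ k
    have hk2' : 2 ≤ k := hk2
    have hterm : ∀ a ∈ Finset.range (k+1),
        R a * R (k-a) * 9^k ≤ (if a = 0 ∨ a = k then 4 else 36) * 3^(2*n*k) := by
      intro a ha
      rw [Finset.mem_range] at ha
      have ha' : a ≤ k := by omega
      have h9k : (9:ℕ)^k = 3^(2*k) := by rw [pow_mul]; norm_num
      by_cases hend : a = 0 ∨ a = k
      · rw [if_pos hend]
        have hmain : R k * 3^(k*k) ≤ 2 * 3^(2*n*k) := psr_R_bound k hkn
        have hprod : R a * R (k-a) = R k := by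
          rcases hend with h | h
          · subst h; rw [Nat.sub_zero, hR0, one_mul]
          · subst h; rw [Nat.sub_self, hR0, mul_one]
        rw [hprod, h9k]
        calc R k * 3^(2*k) ≤ R k * 3^(k*k) := by
              apply Nat.mul_le_mul_left
              exact Nat.pow_le_pow_right (by norm_num) (by nlinarith)
          _ ≤ 2 * 3^(2*n*k) := hmain
          _ ≤ 4 * 3^(2*n*k) := by omega
      · rw [if_neg hend]
        push_neg at hend
        obtain ⟨ha0, hak⟩ := hend
        have ha1 : 1 ≤ a := by omega
        have hb1 : 1 ≤ k - a := by omega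
        have hA : R a * 3^(a*a) ≤ 2 * 3^(2*n*a) := psr_R_bound a (by omega)
        have hB : R (k-a) * 3^((k-a)*(k-a)) ≤ 2 * 3^(2*n*(k-a)) := psr_R_bound (k-a) (by omega)
        have hsq : 2*k ≤ a*a + (k-a)*(k-a) + 2 := by
          have := psr_sq_ge ha1
          have := psr_sq_ge hb1
          omega
        have hcomb : (R a * R (k-a)) * 3^(a*a + (k-a)*(k-a)) ≤ 4 * 3^(2*n*k) := by
          have := Nat.mul_le_mul hA hB
          calc (R a * R (k-a)) * 3^(a*a + (k-a)*(k-a))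
              = (R a * 3^(a*a)) * (R (k-a) * 3^((k-a)*(k-a))) := by rw [pow_add]; ring
            _ ≤ (2 * 3^(2*n*a)) * (2 * 3^(2*n*(k-a))) := this
            _ = 4 * 3^(2*n*a + 2*n*(k-a)) := by rw [pow_add]; ring
            _ = 4 * 3^(2*n*k) := by
                congr 2
                have h : a + (k-a) = k := by omega
                calc 2*n*a + 2*n*(k-a) = 2*n*(a + (k-a)) := by ring
                  _ = 2*n*k := by rw [h]
        calc R a * R (k-a) * 9^k = R a * R (k-a) * 3^(2*k) := by rw [h9k]
          _ ≤ R a * R (k-a) * (3^(a*a + (k-a)*(k-a)) * 9) := by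
              apply Nat.mul_le_mul_left
              calc (3:ℕ)^(2*k) ≤ 3^(a*a + (k-a)*(k-a) + 2) :=
                    Nat.pow_le_pow_right (by norm_num) hsq
                _ = 3^(a*a + (k-a)*(k-a)) * 9 := by rw [pow_add]; norm_num
          _ = 9 * ((R a * R (k-a)) * 3^(a*a + (k-a)*(k-a))) := by ring
          _ ≤ 9 * (4 * 3^(2*n*k)) := Nat.mul_le_mul_left _ hcomb
          _ = 36 * 3^(2*n*k) := by ring
    have hsumw : ∑ a ∈ Finset.range (k+1), (if a = 0 ∨ a = k then 4 else 36) = 36*k - 28 := by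
      obtain ⟨b, rfl⟩ : ∃ b, k = b + 2 := ⟨k - 2, by omega⟩
      rw [Finset.sum_range_succ, Finset.sum_range_succ']
      have h1 : ∀ i ∈ Finset.range (b+1),
          (if i + 1 = 0 ∨ i + 1 = b + 2 then 4 else 36) = 36 := by
        intro i hi
        rw [Finset.mem_range] at hi
        rw [if_neg (by omega)]
      rw [Finset.sum_congr rfl h1, Finset.sum_const, Finset.card_range]
      simp only [smul_eq_mul, true_or, or_true, if_true]
      omega
    have hVsum : Nat.card {X : Fin 2 → Matrix (Fin n) (Fin n) (ZMod 3) // sumRankW X ≤ k} * 9^k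
        ≤ (36*k - 28) * 3^(2*n*k) := by
      calc Nat.card {X : Fin 2 → Matrix (Fin n) (Fin n) (ZMod 3) // sumRankW X ≤ k} * 9^k
          ≤ (∑ a ∈ Finset.range (k+1), R a * R (k-a)) * 9^k :=
            Nat.mul_le_mul_right _ hdec
        _ = ∑ a ∈ Finset.range (k+1), R a * R (k-a) * 9^k := by rw [Finset.sum_mul]
        _ ≤ ∑ a ∈ Finset.range (k+1), (if a = 0 ∨ a = k then 4 else 36) * 3^(2*n*k) :=
            Finset.sum_le_sum hterm
        _ = (∑ a ∈ Finset.range (k+1), (if a = 0 ∨ a = k then 4 else 36)) * 3^(2*n*k) := by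
            rw [Finset.sum_mul]
        _ = (36*k - 28) * 3^(2*n*k) := by rw [hsumw]
    have hfin : Nat.card {X : Fin 2 → Matrix (Fin n) (Fin n) (ZMod 3) // sumRankW X ≤ k} * 9^k
        < 3^(2*n*k) * 9^k := by
      calc Nat.card {X : Fin 2 → Matrix (Fin n) (Fin n) (ZMod 3) // sumRankW X ≤ k} * 9^k
          ≤ (36*k - 28) * 3^(2*n*k) := hVsum
        _ < 9^k * 3^(2*n*k) :=
            Nat.mul_lt_mul_of_lt_of_le (psr_36k hk2') le_rfl (by positivity)
        _ = 3^(2*n*k) * 9^k := by ring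
    exact lt_of_mul_lt_mul_right hfin (Nat.zero_le _)










lemma psr_code_card_le {n k : ℕ} (hkn : k ≤ n)
    (C : Submodule (ZMod 3) (Fin 2 → Matrix (Fin n) (Fin n) (ZMod 3))) (d : ℕ)
    (hd : IsMinDist C d) (hdk : 2*k < d) :
    Nat.card C ≤ 3 ^ (2*n*(n-k)) := by
  classical
  set φ : C → (Fin 2 → Matrix (Fin n) (Fin (n-k)) (ZMod 3)) :=
    fun x => fun i => ((x : Fin 2 → Matrix (Fin n) (Fin n) (ZMod 3)) i).submatrix id
      (fun j : Fin (n-k) => (⟨k + (j : ℕ), by omega⟩ : Fin n)) with hφ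
  have hinj : Function.Injective φ := by
    intro x y hxy
    by_contra hne
    have hzne : (x : Fin 2 → Matrix (Fin n) (Fin n) (ZMod 3))
        - (y : Fin 2 → Matrix (Fin n) (Fin n) (ZMod 3)) ≠ 0 :=
      sub_ne_zero.mpr (fun h => hne (Subtype.ext h))
    have hzC : (x : Fin 2 → Matrix (Fin n) (Fin n) (ZMod 3))
        - (y : Fin 2 → Matrix (Fin n) (Fin n) (ZMod 3)) ∈ C := sub_mem x.2 y.2
    have hcols : ∀ i : Fin 2, ∀ (r c : Fin n), k ≤ (c : ℕ) →
        (((x : Fin 2 → Matrix (Fin n) (Fin n) (ZMod 3))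
          - (y : Fin 2 → Matrix (Fin n) (Fin n) (ZMod 3))) i) r c = 0 := by
      intro i r c hc
      have hcn : (c : ℕ) - k < n - k := by omega
      have hval := congrFun (congrFun (congrFun hxy i) r) (⟨(c : ℕ) - k, hcn⟩ : Fin (n-k))
      have hceq : (⟨k + ((c : ℕ) - k), by omega⟩ : Fin n) = c := by
        apply Fin.ext; simp; omega
      simp only [hφ] at hval
      rw [Matrix.submatrix_apply, Matrix.submatrix_apply, id_eq, hceq] at hval
      simp only [Pi.sub_apply, Matrix.sub_apply]
      rw [hval, sub_self]
    have hrank : sumRankW ((x : Fin 2 → Matrix (Fin n) (Fin n) (ZMod 3))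
        - (y : Fin 2 → Matrix (Fin n) (Fin n) (ZMod 3))) ≤ 2*k := by
      rw [psr_sumRankW_two]
      have h0 := psr_rank_le_of_zero_cols hkn _ (hcols 0)
      have h1 := psr_rank_le_of_zero_cols hkn _ (hcols 1)
      omega
    have hge := hd.2 ⟨_, hzC, hzne, rfl⟩
    omega
  calc Nat.card C ≤ Nat.card (Fin 2 → Matrix (Fin n) (Fin (n-k)) (ZMod 3)) :=
        Nat.card_le_card_of_injective φ hinj
    _ = 3 ^ (2*n*(n-k)) := by
        rw [Nat.card_fun, psr_card_matrix, Nat.card_eq_fintype_card, Fintype.card_fin,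
          ← pow_mul]
        congr 1
        ring


theorem stmt_7 (n : ℕ) (hn : 3 ≤ n) :
    ¬ ∃ (C : Submodule (ZMod 3) (Fin 2 → Matrix (Fin n) (Fin n) (ZMod 3))) (d : ℕ),
        IsMinDist C d ∧ IsPerfect (ZMod 3) C d ∧ 1 ≤ (d - 1) / 2 := by
  rintro ⟨C, d, hmin, hperf, hk⟩
  set k := (d - 1) / 2 with hkdef
  -- d ≤ 2n
  have hd2n : d ≤ 2*n := by
    obtain ⟨x, hxC, hx0, hxw⟩ := hmin.1
    have h0 : (x 0).rank ≤ n := by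
      simpa using Matrix.rank_le_card_width (x 0)
    have h1 : (x 1).rank ≤ n := by
      simpa using Matrix.rank_le_card_width (x 1)
    rw [← hxw, psr_sumRankW_two]
    omega
  have hd3 : 3 ≤ d := by omega
  have hk1 : 1 ≤ k := hk
  have hkn : k ≤ n - 1 := by omega
  have h2k : 2*k < d := by omega
  have hcode : Nat.card C ≤ 3 ^ (2*n*(n-k)) :=
    psr_code_card_le (by omega) C d hmin h2k
  have hM : Nat.card (Fin 2 → Matrix (Fin n) (Fin n) (ZMod 3)) = 3 ^ (2*n*n) := by
    rw [Nat.card_fun, psr_card_matrix, Nat.card_eq_fintype_card, Fintype.card_fin, ← pow_mul]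
    congr 1
    ring
  have hperf' : Nat.card C * ballVol (ZMod 3) 2 n n k
      = Nat.card (Fin 2 → Matrix (Fin n) (Fin n) (ZMod 3)) := hperf
  rw [hM] at hperf'
  have hsplit : (3:ℕ) ^ (2*n*n) = 3 ^ (2*n*k) * 3 ^ (2*n*(n-k)) := by
    rw [← pow_add]
    congr 1
    have h : k + (n - k) = n := by omega
    exact (calc 2*n*k + 2*n*(n-k) = 2*n*(k + (n-k)) := by ring
      _ = 2*n*n := by rw [h]).symm
  have hlow : 3 ^ (2*n*k) ≤ ballVol (ZMod 3) 2 n n k := by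
    have h1 : 3 ^ (2*n*k) * 3 ^ (2*n*(n-k))
        ≤ ballVol (ZMod 3) 2 n n k * 3 ^ (2*n*(n-k)) := by
      calc 3 ^ (2*n*k) * 3 ^ (2*n*(n-k)) = 3 ^ (2*n*n) := hsplit.symm
        _ = Nat.card C * ballVol (ZMod 3) 2 n n k := hperf'.symm
        _ ≤ 3 ^ (2*n*(n-k)) * ballVol (ZMod 3) 2 n n k :=
            Nat.mul_le_mul_right _ hcode
        _ = ballVol (ZMod 3) 2 n n k * 3 ^ (2*n*(n-k)) := by ring
    exact Nat.le_of_mul_le_mul_right h1 (by positivity)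
  have hup : ballVol (ZMod 3) 2 n n k < 3 ^ (2*n*k) := by
    have := psr_ball_lt (n := n) (k := k) hk1 (by omega)
    exact this
  omega
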